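/- In the scalar tree T generated by the decreasing-order construction algorithm, every node's scalar value is greater than or equal to its parent's scalar value. -/

import Mathlib

variable {V : Type*} [Fintype V] [DecidableEq V]

/-- Follow the parent pointers \`p\` for at most \`k\` steps. -/
def iterParent {α : Type*} (p : α → Option α) : ℕ → α → α
  | 0, a => a
  | k + 1, a =>
    match p a with
    | none => a
    | some b => iterParent p k b

/-- The root of the current subtree containing \`a\` in the forest \`p\`. -/
def rootOf {α : Type*} [Fintype α] (p : α → Option α) (a : α) : α :=
  iterParent p (Fintype.card α) a

/-- Processing vertex \`v\`: for each already-processed neighbor \`u\` whose current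
subtree does not contain \`v\`, make \`v\` the parent of the root of that subtree. -/
def stepVert (G : SimpleGraph V) [DecidableRel G.Adj] (v : V) (processed : List V)
    (p : V → Option V) : V → Option V :=
  processed.foldl (fun q u =>
    if G.Adj v u ∧ rootOf q u ≠ v then Function.update q (rootOf q u) (some v) else q) p

/-- Run the scalar-tree construction on the remaining vertex list, given the
already-processed vertices and the current parent assignment. -/
def runVert (G : SimpleGraph V) [DecidableRel G.Adj] :
    List V → List V → (V → Option V) → (V → Option V)
  | [], _, p => p
  | v :: rest, processed, p => runVert G rest (v :: processed) (stepVert G v processed p)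

/-- The parent assignment produced by processing the vertices of \`vs\` in order. -/
def scalarForest (G : SimpleGraph V) [DecidableRel G.Adj] (vs : List V) : V → Option V :=
  runVert G vs [] (fun _ => none)

/-- \`C\` is a maximal α-connected component of the vertex-scalar graph \`(G, f)\`. -/
def IsMACC (G : SimpleGraph V) (f : V → ℝ) (α : ℝ) (C : Set V) : Prop :=
  C.Nonempty ∧ (∀ v ∈ C, α ≤ f v) ∧
  (∀ v ∈ C, ∀ w, G.Adj v w → w ∉ C → f w < α) ∧
  (G.induce C).Connected

lemma iterParent_mem {α : Type*} (p : α → Option α) (S : Set α)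
    (hS : ∀ x y, p x = some y → y ∈ S) :
    ∀ k a, a ∈ S → iterParent p k a ∈ S
  | 0, _, ha => ha
  | k+1, a, ha => by
      unfold iterParent
      cases hpa : p a with
      | none => exact ha
      | some b => exact iterParent_mem p S hS k b (hS a b hpa)

lemma stepVert_inv (G : SimpleGraph V) [DecidableRel G.Adj] (f : V → ℝ)
    (v : V) (processed : List V) (p : V → Option V)
    (hv : ∀ x ∈ processed, f v ≤ f x)
    (hp : ∀ x y, p x = some y → x ∈ processed ∧ (y ∈ processed ∨ y = v) ∧ f y ≤ f x) :
    ∀ x y, stepVert G v processed p x = some y →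
      x ∈ processed ∧ (y ∈ processed ∨ y = v) ∧ f y ≤ f x := by
  unfold stepVert
  suffices H : ∀ (L : List V) (q : V → Option V),
      (∀ u ∈ L, u ∈ processed) →
      (∀ x y, q x = some y → x ∈ processed ∧ (y ∈ processed ∨ y = v) ∧ f y ≤ f x) →
      ∀ x y, (L.foldl (fun q u =>
        if G.Adj v u ∧ rootOf q u ≠ v then Function.update q (rootOf q u) (some v) else q)
        q) x = some y → x ∈ processed ∧ (y ∈ processed ∨ y = v) ∧ f y ≤ f x by
    exact H processed p (fun _ h => h) hp
  intro L
  induction L with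
  | nil => intro q _ hq; exact hq
  | cons u L ih =>
      intro q hL hq x y hxy
      simp only [List.foldl_cons] at hxy
      refine ih _ (fun a ha => hL a (List.mem_cons_of_mem _ ha)) ?_ x y hxy
      intro x y hxy
      by_cases hc : G.Adj v u ∧ rootOf q u ≠ v
      · rw [if_pos hc] at hxy
        have hroot : rootOf q u ∈ {x | x ∈ processed ∨ x = v} := by
          refine iterParent_mem q {x | x ∈ processed ∨ x = v} ?_ _ u
            (Or.inl (hL u (List.mem_cons_self)))
          intro a b hab
          rcases (hq a b hab).2.1 with h | h
          · exact Or.inl h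
          · exact Or.inr h
        have hrootp : rootOf q u ∈ processed := by
          rcases hroot with h | h
          · exact h
          · exact absurd h hc.2
        by_cases hx : x = rootOf q u
        · subst hx
          rw [Function.update_self] at hxy
          cases hxy
          exact ⟨hrootp, Or.inr rfl, hv _ hrootp⟩
        · rw [Function.update_of_ne hx] at hxy
          exact hq x y hxy
      · rw [if_neg hc] at hxy
        exact hq x y hxy

lemma runVert_inv (G : SimpleGraph V) [DecidableRel G.Adj] (f : V → ℝ) :
    ∀ (rest processed : List V) (p : V → Option V),
    rest.Pairwise (fun a b => f b ≤ f a) →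
    (∀ a ∈ rest, ∀ b ∈ processed, f a ≤ f b) →
    (∀ x y, p x = some y → x ∈ processed ∧ y ∈ processed ∧ f y ≤ f x) →
    ∀ x y, runVert G rest processed p x = some y → f y ≤ f x
  | [], processed, p, _, _, hp, x, y, h => (hp x y h).2.2
  | v :: rest, processed, p, hsort, hord, hp, x, y, h => by
      rw [List.pairwise_cons] at hsort
      refine runVert_inv G f rest (v :: processed) (stepVert G v processed p)
        hsort.2 ?_ ?_ x y h
      · intro a ha b hb
        rcases List.mem_cons.mp hb with rfl | hb
        · exact hsort.1 a ha
        · exact hord a (List.mem_cons_of_mem _ ha) b hb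
      · intro x y hxy
        have := stepVert_inv G f v processed p
          (fun b hb => hord v (List.mem_cons_self) b hb)
          (fun a b hab => ⟨(hp a b hab).1, Or.inl (hp a b hab).2.1, (hp a b hab).2.2⟩)
          x y hxy
        refine ⟨List.mem_cons_of_mem _ this.1, ?_, this.2.2⟩
        rcases this.2.1 with h | rfl
        · exact List.mem_cons_of_mem _ h
        · exact List.mem_cons_self

/-- In the scalar tree generated by the decreasing-order construction, every
node's scalar value is at least its parent's scalar value. -/
theorem stmt11 (G : SimpleGraph V) [DecidableRel G.Adj] (f : V → ℝ)
    (vs : List V) (hnd : vs.Nodup) (hall : ∀ v : V, v ∈ vs)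
    (hsort : vs.Pairwise (fun a b => f b ≤ f a))
    (u w : V) (h : scalarForest G vs u = some w) :
    f w ≤ f u := by
  exact runVert_inv G f vs [] (fun _ => none) hsort (by simp) (by simp) u w h
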